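/- Lemma 6.1(b) (removing a white bead from a necklace). Let l be a necklace with n white beads, let v be a white position of l, and let l' = l.eraseIdx v be the necklace obtained by removing the bead at position v. Then for every k ≥ 1: card (P_k(l)) − 2n < card (P_k(l')) ≤ card (P_k(l)) (equivalently, card (P_k(l)) < card (P_k(l')) + 2n), and consequently for every J ≥ 1: μ_J(l) − 2·J·n < μ_J(l') ≤ μ_J(l). -/

import Mathlib

namespace Necklace

/-- The cyclic relative position of `p` with respect to `i` on a necklace of length `n`. -/
def cyclicRel (n : ℕ) (i p : Fin n) : ℕ := ((p : ℕ) + n - (i : ℕ)) % n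

/-- `InArc i j p` means that the position `p` lies on the clockwise arc from `i` to `j`
(excluding the endpoints `i` and `j`). -/
def InArc {n : ℕ} (i j p : Fin n) : Prop :=
  0 < cyclicRel n i p ∧ cyclicRel n i p < cyclicRel n i j

instance {n : ℕ} (i j p : Fin n) : Decidable (InArc i j p) :=
  inferInstanceAs (Decidable (0 < cyclicRel n i p ∧ cyclicRel n i p < cyclicRel n i j))

/-- An entry `false` of a necklace is a white bead, an entry `true` is a black bead. -/
def IsWhite (l : List Bool) (p : Fin l.length) : Prop := l.get p = false

def IsBlack (l : List Bool) (p : Fin l.length) : Prop := l.get p = true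

instance (l : List Bool) (p : Fin l.length) : Decidable (IsWhite l p) :=
  inferInstanceAs (Decidable (l.get p = false))

instance (l : List Bool) (p : Fin l.length) : Decidable (IsBlack l p) :=
  inferInstanceAs (Decidable (l.get p = true))

/-- The number of black beads on the clockwise arc from `i` to `j`. -/
def blackArc (l : List Bool) (i j : Fin l.length) : ℕ :=
  (Finset.univ.filter fun p : Fin l.length => InArc i j p ∧ IsBlack l p).card

/-- The number of white beads on the clockwise arc from `i` to `j`. -/
def whiteArc (l : List Bool) (i j : Fin l.length) : ℕ :=
  (Finset.univ.filter fun p : Fin l.length => InArc i j p ∧ IsWhite l p).card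

/-- `P l k` is the set of ordered pairs `(i, j)` of distinct white beads of the necklace
`l` whose clockwise arc from `i` to `j` contains at least `k` black beads. -/
def P (l : List Bool) (k : ℕ) : Finset (Fin l.length × Fin l.length) :=
  Finset.univ.filter fun q : Fin l.length × Fin l.length =>
    q.1 ≠ q.2 ∧ IsWhite l q.1 ∧ IsWhite l q.2 ∧ k ≤ blackArc l q.1 q.2

/-- The `J`-mixture `μ_J(l)` of the necklace `l`. -/
def mixture (J : ℕ) (l : List Bool) : ℕ := ∑ k ∈ Finset.Icc 1 J, (P l k).card

/-- The number of white beads of `l`. -/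
def whiteCount (l : List Bool) : ℕ := l.count false

lemma cyclicRel_eq {n : ℕ} (i p : Fin n) :
    cyclicRel n i p = if (i : ℕ) ≤ p then (p : ℕ) - i else n + (p : ℕ) - i := by
  have hi := i.isLt; have hp := p.isLt
  unfold cyclicRel
  split_ifs with h
  · have h2 : (p : ℕ) + n - i = n + ((p : ℕ) - i) := by omega
    rw [h2, Nat.add_mod_left, Nat.mod_eq_of_lt (by omega)]
  · rw [Nat.mod_eq_of_lt (by omega)]; omega

variable (l : List Bool) (v : Fin l.length)

lemma len_erase : (l.eraseIdx (v : ℕ)).length = l.length - 1 := by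
  rw [List.length_eraseIdx, if_pos v.isLt]

def emb (p : Fin (l.eraseIdx (v : ℕ)).length) : Fin l.length :=
  ⟨if (p : ℕ) < v then (p : ℕ) else (p : ℕ) + 1, by
    have hp := p.isLt; have hL := len_erase l v; have hv := v.isLt
    split_ifs <;> omega⟩

lemma emb_val (p : Fin (l.eraseIdx (v : ℕ)).length) :
    (emb l v p : ℕ) = if (p : ℕ) < v then (p : ℕ) else (p : ℕ) + 1 := rfl

lemma get_emb (p : Fin (l.eraseIdx (v : ℕ)).length) :
    (l.eraseIdx (v : ℕ)).get p = l.get (emb l v p) := by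
  simp only [List.get_eq_getElem, List.getElem_eraseIdx]
  by_cases h : (p : ℕ) < (v : ℕ) <;> simp [h, emb]

lemma emb_inj : Function.Injective (emb l v) := by
  intro a b h
  have h2 := congrArg Fin.val h
  rw [emb_val, emb_val] at h2
  apply Fin.ext
  split_ifs at h2 <;> omega

lemma emb_ne (p : Fin (l.eraseIdx (v : ℕ)).length) : emb l v p ≠ v := by
  intro h
  have h2 := congrArg Fin.val h
  rw [emb_val] at h2
  split_ifs at h2 <;> omega

def inv (q : Fin l.length) (h : q ≠ v) : Fin (l.eraseIdx (v : ℕ)).length :=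
  ⟨if (q : ℕ) < v then (q : ℕ) else (q : ℕ) - 1, by
    have hq := q.isLt; have hv := v.isLt; have hL := len_erase l v
    have hne : (q : ℕ) ≠ (v : ℕ) := fun hc => h (Fin.ext hc)
    split_ifs <;> omega⟩

lemma emb_inv (q : Fin l.length) (h : q ≠ v) : emb l v (inv l v q h) = q := by
  apply Fin.ext
  rw [emb_val]
  have hne : (q : ℕ) ≠ (v : ℕ) := fun hc => h (Fin.ext hc)
  simp only [inv]
  split_ifs <;> omega

lemma inArc_emb (i j p : Fin (l.eraseIdx (v : ℕ)).length) :
    InArc (emb l v i) (emb l v j) (emb l v p) ↔ InArc i j p := by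
  have hi := i.isLt; have hj := j.isLt; have hp := p.isLt
  have hL := len_erase l v
  have hv := v.isLt
  unfold InArc
  rw [cyclicRel_eq, cyclicRel_eq, cyclicRel_eq, cyclicRel_eq, emb_val, emb_val, emb_val]
  split_ifs <;> omega

lemma blackArc_emb (hv : IsWhite l v) (i j : Fin (l.eraseIdx (v : ℕ)).length) :
    blackArc (l.eraseIdx (v : ℕ)) i j = blackArc l (emb l v i) (emb l v j) := by
  classical
  unfold blackArc
  have himg : (Finset.univ.filter fun p : Fin l.length =>
      InArc (emb l v i) (emb l v j) p ∧ IsBlack l p)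
      = (Finset.univ.filter fun p : Fin (l.eraseIdx (v : ℕ)).length =>
          InArc i j p ∧ IsBlack (l.eraseIdx (v : ℕ)) p).image (emb l v) := by
    ext q
    simp only [Finset.mem_filter, Finset.mem_image, Finset.mem_univ, true_and]
    constructor
    · rintro ⟨h1, h2⟩
      have hqv : q ≠ v := by
        intro hc; subst hc
        rw [IsWhite] at hv; rw [IsBlack, hv] at h2; exact Bool.noConfusion h2
      refine ⟨inv l v q hqv, ⟨?_, ?_⟩, emb_inv l v q hqv⟩
      · have h3 := (inArc_emb l v i j (inv l v q hqv)).1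
        rw [emb_inv] at h3
        exact h3 h1
      · rw [IsBlack, get_emb, emb_inv]; exact h2
    · rintro ⟨p, ⟨h1, h2⟩, rfl⟩
      exact ⟨(inArc_emb l v i j p).2 h1, by rw [IsBlack, ← get_emb]; exact h2⟩
  rw [himg, Finset.card_image_of_injective _ (emb_inj l v)]

lemma white_emb (p : Fin (l.eraseIdx (v : ℕ)).length) :
    IsWhite (l.eraseIdx (v : ℕ)) p ↔ IsWhite l (emb l v p) := by
  rw [IsWhite, IsWhite, get_emb]

lemma count_eq_card : ∀ (l : List Bool) (b : Bool),
    (Finset.univ.filter fun i : Fin l.length => l.get i = b).card = l.count b := by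
  intro l
  induction l with
  | nil => intro b; simp
  | cons a t ih =>
    intro b
    rw [Finset.card_filter]
    simp only [List.length_cons]
    rw [Fin.sum_univ_succ]
    simp only [List.get_eq_getElem, Fin.val_zero, Fin.val_succ, List.getElem_cons_zero,
      List.getElem_cons_succ]
    rw [← Finset.card_filter]
    simp only [List.get_eq_getElem] at ih
    rw [ih b, List.count_cons]
    rcases Bool.eq_or_eq_not a b with h | h <;> subst h <;> simp [Nat.add_comm]


/-- Lemma 6.1(b): removing a white bead `v` from a necklace `l` with `n` white beads
decreases each `card (P_k)` by less than `2n`, and hence decreases `μ_J` by less than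
`2·J·n`. -/
theorem mixture_erase_white (l : List Bool) (hl : l ≠ []) (v : Fin l.length)
    (hv : IsWhite l v) (n : ℕ) (hn : n = whiteCount l) :
    (∀ k : ℕ, 1 ≤ k →
      (P (l.eraseIdx (v : ℕ)) k).card ≤ (P l k).card ∧
      (P l k).card < (P (l.eraseIdx (v : ℕ)) k).card + 2 * n) ∧
    (∀ J : ℕ, 1 ≤ J →
      mixture J (l.eraseIdx (v : ℕ)) ≤ mixture J l ∧
      mixture J l < mixture J (l.eraseIdx (v : ℕ)) + 2 * J * n) := by
  classical
  have hn1 : 1 ≤ n := by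
    rw [hn, whiteCount, ← count_eq_card]
    exact Finset.card_pos.mpr ⟨v, by simpa [Finset.mem_filter, IsWhite] using hv⟩
  set W : Finset (Fin l.length) := Finset.univ.filter (fun w => l.get w = false) with hW
  have hWcard : W.card = n := by rw [hn, whiteCount, hW, count_eq_card]
  have hvW : v ∈ W := by simpa [hW, Finset.mem_filter, IsWhite] using hv
  have key : ∀ k : ℕ, (P (l.eraseIdx (v : ℕ)) k).card ≤ (P l k).card ∧
      (P l k).card + 1 ≤ (P (l.eraseIdx (v : ℕ)) k).card + 2 * n := by
    intro k
    have himg : (P l k).filter (fun q => q.1 ≠ v ∧ q.2 ≠ v)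
        = (P (l.eraseIdx (v : ℕ)) k).image (fun q => (emb l v q.1, emb l v q.2)) := by
      ext q
      simp only [P, Finset.mem_filter, Finset.mem_image, Finset.mem_univ, true_and]
      constructor
      · rintro ⟨⟨hne, hw1, hw2, hb⟩, hv1, hv2⟩
        refine ⟨(inv l v q.1 hv1, inv l v q.2 hv2), ⟨?_, ?_, ?_, ?_⟩, ?_⟩
        · intro hc
          apply hne
          have h2 := congrArg (emb l v) hc
          rwa [emb_inv, emb_inv] at h2
        · rw [white_emb, emb_inv]; exact hw1
        · rw [white_emb, emb_inv]; exact hw2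
        · rw [blackArc_emb l v hv, emb_inv, emb_inv]; exact hb
        · show (emb l v (inv l v q.1 hv1), emb l v (inv l v q.2 hv2)) = q
          rw [emb_inv, emb_inv]
      · rintro ⟨p, ⟨hne, hw1, hw2, hb⟩, rfl⟩
        refine ⟨⟨fun hc => hne (emb_inj l v hc), ?_, ?_, ?_⟩,
          emb_ne l v p.1, emb_ne l v p.2⟩
        · exact (white_emb l v p.1).1 hw1
        · exact (white_emb l v p.2).1 hw2
        · rw [← blackArc_emb l v hv]; exact hb
    have hcard : ((P l k).filter (fun q => q.1 ≠ v ∧ q.2 ≠ v)).card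
        = (P (l.eraseIdx (v : ℕ)) k).card := by
      rw [himg]
      apply Finset.card_image_of_injective
      intro a b h
      exact Prod.ext (emb_inj l v (congrArg Prod.fst h)) (emb_inj l v (congrArg Prod.snd h))
    constructor
    · rw [← hcard]; exact Finset.card_filter_le _ _
    · have hsplit := Finset.card_filter_add_card_filter_not
        (s := P l k) (p := fun q => q.1 ≠ v ∧ q.2 ≠ v)
      have hsub : (P l k).filter (fun q => ¬(q.1 ≠ v ∧ q.2 ≠ v))
          ⊆ ((W.erase v).image (fun w => (v, w))) ∪ ((W.erase v).image (fun w => (w, v))) := by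
        intro q hq
        simp only [Finset.mem_filter, P, Finset.mem_univ, true_and, not_and, not_not,
          ne_eq] at hq
        obtain ⟨⟨hne, hw1, hw2, _⟩, himp⟩ := hq
        rw [Finset.mem_union, Finset.mem_image, Finset.mem_image]
        by_cases h1 : q.1 = v
        · left
          refine ⟨q.2, Finset.mem_erase.mpr ⟨fun hc => hne (h1.trans hc.symm), ?_⟩, ?_⟩
          · simpa [hW, Finset.mem_filter, IsWhite] using hw2
          · rw [← h1]
        · right
          have h2 : q.2 = v := himp h1
          refine ⟨q.1, Finset.mem_erase.mpr ⟨h1, ?_⟩, ?_⟩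
          · simpa [hW, Finset.mem_filter, IsWhite] using hw1
          · rw [← h2]
      have hneg : ((P l k).filter (fun q => ¬(q.1 ≠ v ∧ q.2 ≠ v))).card ≤ 2 * (n - 1) := by
        calc ((P l k).filter (fun q => ¬(q.1 ≠ v ∧ q.2 ≠ v))).card
            ≤ (((W.erase v).image (fun w => (v, w))) ∪ ((W.erase v).image (fun w => (w, v)))).card :=
              Finset.card_le_card hsub
          _ ≤ ((W.erase v).image (fun w => (v, w))).card + ((W.erase v).image (fun w => (w, v))).card :=
              Finset.card_union_le _ _
          _ ≤ (W.erase v).card + (W.erase v).card :=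
              Nat.add_le_add (Finset.card_image_le) (Finset.card_image_le)
          _ = 2 * (n - 1) := by rw [Finset.card_erase_of_mem hvW, hWcard]; ring
      omega
  refine ⟨fun k _ => ⟨(key k).1, by have := (key k).2; omega⟩, fun J hJ => ⟨?_, ?_⟩⟩
  · exact Finset.sum_le_sum (fun k _ => (key k).1)
  · have hs : ∑ k ∈ Finset.Icc 1 J, ((P l k).card + 1)
        ≤ ∑ k ∈ Finset.Icc 1 J, ((P (l.eraseIdx (v : ℕ)) k).card + 2 * n) :=
      Finset.sum_le_sum fun k _ => (key k).2
    rw [Finset.sum_add_distrib, Finset.sum_add_distrib, Finset.sum_const, Finset.sum_const,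
      Nat.card_Icc] at hs
    simp only [smul_eq_mul] at hs
    unfold mixture
    have h1 : (J + 1 - 1) * 1 = J := by omega
    have h2 : (J + 1 - 1) * (2 * n) = 2 * J * n := by
      have : J + 1 - 1 = J := by omega
      rw [this]; ring
    rw [h1, h2] at hs
    have h3 : 1 ≤ 2 * J * n := by
      have : 1 * 1 * 1 ≤ 2 * J * n := by
        apply Nat.mul_le_mul (Nat.mul_le_mul (by omega) hJ) hn1
      simpa using this
    linarith

end Necklace
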